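/- In a 3-connected graph, for every edge e with endpoints u and v, there exist two cycles c_1, c_2 both containing e that are disjoint away from e (they share only e and its endpoints); consequently, in the metric graph, l(e) = (l(c_1) + l(c_2) - l(c_3))/2, where c_3 is the cycle formed by (c_1 minus e) followed by the reversal of (c_2 minus e). -/

import Mathlib

open scoped Classical

/-- A finite multigraph: edges with a source and target vertex. -/
structure Multigraph (V E : Type) where
  src : E → V
  tgt : E → V

/-- A dart is an oriented edge: an edge together with a direction. -/
abbrev Dart (E : Type) := E × Bool

namespace Multigraph

variable {V E : Type}

/-- Source of a dart. -/
def dsrc (G : Multigraph V E) (d : Dart E) : V := if d.2 then G.src d.1 else G.tgt d.1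

/-- Target of a dart. -/
def dtgt (G : Multigraph V E) (d : Dart E) : V := if d.2 then G.tgt d.1 else G.src d.1

/-- A closed walk: a nonempty cyclically consistent list of darts. -/
def IsClosedWalk (G : Multigraph V E) (w : List (Dart E)) : Prop :=
  w ≠ [] ∧ List.Chain' (fun d d' => G.dtgt d = G.dsrc d') w ∧
    ∀ dl ∈ w.getLast?, ∀ dh ∈ w.head?, G.dtgt dl = G.dsrc dh

/-- A cycle: a closed walk repeating no edges and no vertices. -/
def IsCycle (G : Multigraph V E) (w : List (Dart E)) : Prop :=
  G.IsClosedWalk w ∧ (w.map Prod.fst).Nodup ∧ (w.map G.dsrc).Nodup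

/-- A walk from `u` to `v`. -/
def IsWalkFrom (G : Multigraph V E) (w : List (Dart E)) (u v : V) : Prop :=
  List.Chain' (fun d d' => G.dtgt d = G.dsrc d') w ∧
    (w = [] → u = v) ∧ (∀ d ∈ w.head?, G.dsrc d = u) ∧ (∀ d ∈ w.getLast?, G.dtgt d = v)

/-- Connectivity: any two vertices are joined by a walk. -/
def Conn (G : Multigraph V E) : Prop := ∀ u v : V, ∃ w, G.IsWalkFrom w u v

/-- The 1-chain (with `ℤ` coefficients) of a single dart. -/
noncomputable def dartChain (d : Dart E) : E → ℤ :=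
  fun e => if d.1 = e then (if d.2 then 1 else -1) else 0

/-- The 1-chain of a walk. -/
noncomputable def chain (w : List (Dart E)) : E → ℤ := (w.map dartChain).sum

/-- The length of a walk given edge lengths `l`. -/
def walkLength (l : E → ℝ) (w : List (Dart E)) : ℝ := (w.map fun d => l d.1).sum

/-- The set of (unoriented) edges used by a walk. -/
def edges (w : List (Dart E)) : Set E := {e | ∃ b, (e, b) ∈ w}

/-- The set of vertices visited by a closed walk. -/
def vertsOf (G : Multigraph V E) (w : List (Dart E)) : Set V := {v | ∃ d ∈ w, G.dsrc d = v}

/-- Restriction of a graph to a set of edges. -/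
def restrict (G : Multigraph V E) (S : Set E) : Multigraph V S where
  src e := G.src e.1
  tgt e := G.tgt e.1

/-- Deletion of a set of vertices (and all incident edges). -/
def deleteVerts (G : Multigraph V E) (X : Set V) :
    Multigraph {v // v ∉ X} {e // G.src e ∉ X ∧ G.tgt e ∉ X} where
  src e := ⟨G.src e.1, e.2.1⟩
  tgt e := ⟨G.tgt e.1, e.2.2⟩

/-- Degree of a vertex (loops count twice). -/
noncomputable def degree (G : Multigraph V E) [Fintype E] (v : V) : ℕ :=
  (Finset.univ.filter fun e => G.src e = v).card +
  (Finset.univ.filter fun e => G.tgt e = v).card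

/-- The boundary of a 1-chain. -/
noncomputable def boundary (G : Multigraph V E) [Fintype E] (x : E → ℤ) : V → ℤ :=
  fun v => ∑ e, x e * ((if G.tgt e = v then 1 else 0) - (if G.src e = v then 1 else 0))

/-- The first homology `H₁(G,ℤ)`, as the kernel of the boundary map. -/
def H1 (G : Multigraph V E) [Fintype E] : Submodule ℤ (E → ℤ) where
  carrier := {x | G.boundary x = 0}
  add_mem' := by
    intro a b ha hb
    have h : G.boundary (a + b) = G.boundary a + G.boundary b := by
      funext v
      simp [boundary, add_mul, Finset.sum_add_distrib]
    simp only [Set.mem_setOf_eq] at *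
    rw [h, ha, hb, add_zero]
  zero_mem' := by
    simp only [Set.mem_setOf_eq]
    funext v
    simp [boundary]
  smul_mem' := by
    intro c x hx
    have h : G.boundary (c • x) = c • G.boundary x := by
      funext v
      simp [boundary, Finset.mul_sum, mul_assoc]
    simp only [Set.mem_setOf_eq] at *
    rw [h, hx, smul_zero]

/-- The path metric induced by edge lengths. -/
noncomputable def gdist (G : Multigraph V E) (l : E → ℝ) (u v : V) : ℝ :=
  sInf {x | ∃ w, G.IsWalkFrom w u v ∧ walkLength l w = x}

/-- Minimal length of a closed walk in a given homology class. -/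
noncomputable def minLen (G : Multigraph V E) (l : E → ℝ) (h : E → ℤ) : ℝ :=
  sInf {x | ∃ w, G.IsClosedWalk w ∧ chain w = h ∧ walkLength l w = x}

end Multigraph

open Multigraph
namespace Multigraph

variable {V E : Type}

/-- Flip a dart. -/
def fd (d : Dart E) : Dart E := (d.1, !d.2)

@[simp] theorem fst_fd (d : Dart E) : (fd d).1 = d.1 := rfl
@[simp] theorem fd_fd (d : Dart E) : fd (fd d) = d := by simp [fd]
@[simp] theorem dsrc_fd (G : Multigraph V E) (d : Dart E) : G.dsrc (fd d) = G.dtgt d := by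
  rcases d with ⟨g, b⟩; cases b <;> rfl
@[simp] theorem dtgt_fd (G : Multigraph V E) (d : Dart E) : G.dtgt (fd d) = G.dsrc d := by
  rcases d with ⟨g, b⟩; cases b <;> rfl

/-- Reverse of a walk. -/
def rev (w : List (Dart E)) : List (Dart E) := (w.map fd).reverse

@[simp] theorem rev_nil : rev ([] : List (Dart E)) = [] := rfl
theorem rev_cons (d : Dart E) (w : List (Dart E)) : rev (d :: w) = rev w ++ [fd d] := by
  simp [rev]

theorem mem_rev {w : List (Dart E)} {d : Dart E} : d ∈ rev w ↔ fd d ∈ w := by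
  constructor
  · intro h
    simp only [rev, List.mem_reverse, List.mem_map] at h
    obtain ⟨d', hd', rfl⟩ := h
    simpa using hd'
  · intro h
    simp only [rev, List.mem_reverse, List.mem_map]
    exact ⟨fd d, h, by simp⟩

theorem map_fst_rev (w : List (Dart E)) :
    (rev w).map Prod.fst = (w.map Prod.fst).reverse := by
  simp [rev, List.map_reverse, List.map_map]

/-- Inductive walk predicate. -/
inductive Wk (G : Multigraph V E) : V → List (Dart E) → V → Prop
  | nil (u : V) : Wk G u [] u
  | cons {u v : V} {d : Dart E} {l : List (Dart E)} :
      G.dsrc d = u → Wk G (G.dtgt d) l v → Wk G u (d :: l) v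

/-- The list of vertices visited by a walk starting at `u`. -/
def vl (G : Multigraph V E) (u : V) (w : List (Dart E)) : List V := u :: w.map G.dtgt

theorem vl_append (G : Multigraph V E) (u : V) (w1 w2 : List (Dart E)) :
    G.vl u (w1 ++ w2) = G.vl u w1 ++ w2.map G.dtgt := by
  simp [vl]

theorem Wk.nil_eq {G : Multigraph V E} {u v : V} (h : G.Wk u [] v) : u = v := by
  cases h; rfl

theorem Wk.append {G : Multigraph V E} {u v z : V} {w1 w2 : List (Dart E)}
    (h1 : G.Wk u w1 v) (h2 : G.Wk v w2 z) : G.Wk u (w1 ++ w2) z := by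
  induction h1 with
  | nil => simpa
  | cons hd _ ih => exact Wk.cons hd (ih h2)

theorem Wk.single {G : Multigraph V E} {d : Dart E} : G.Wk (G.dsrc d) [d] (G.dtgt d) :=
  Wk.cons rfl (Wk.nil _)

theorem Wk.reverse {G : Multigraph V E} {u v : V} {w : List (Dart E)}
    (h : G.Wk u w v) : G.Wk v (rev w) u := by
  induction h with
  | nil => exact Wk.nil _
  | @cons u' v' d l hd hwk ih =>
      rw [rev_cons]
      refine ih.append ?_
      have : G.Wk (G.dsrc (fd d)) [fd d] (G.dtgt (fd d)) := Wk.single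
      simpa [hd] using this

theorem Wk.dsrc_append {G : Multigraph V E} {u v : V} {w : List (Dart E)}
    (h : G.Wk u w v) : w.map G.dsrc ++ [v] = G.vl u w := by
  induction h with
  | nil => rfl
  | cons hd _ ih => simp_all [vl]

theorem Wk.vl_rev {G : Multigraph V E} {u v : V} {w : List (Dart E)}
    (h : G.Wk u w v) : G.vl v (rev w) = (G.vl u w).reverse := by
  have h1 := h.reverse.dsrc_append
  have h2 := h.dsrc_append
  have hmap : (rev w).map G.dsrc = (w.map G.dtgt).reverse := by
    simp [rev, List.map_reverse, List.map_map]
  rw [← h1, hmap, vl]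
  simp

theorem Wk.mem_vl_src {G : Multigraph V E} {u v : V} {w : List (Dart E)} {d : Dart E}
    (h : G.Wk u w v) (hd : d ∈ w) : G.dsrc d ∈ G.vl u w := by
  rw [← h.dsrc_append]
  exact List.mem_append_left _ (List.mem_map_of_mem hd)

theorem mem_vl_tgt {G : Multigraph V E} {u : V} {w : List (Dart E)} {d : Dart E}
    (hd : d ∈ w) : G.dtgt d ∈ G.vl u w :=
  List.mem_cons_of_mem _ (List.mem_map_of_mem hd)

theorem Wk.head_mem_vl {G : Multigraph V E} {u v : V} {w : List (Dart E)}
    (_ : G.Wk u w v) : u ∈ G.vl u w := List.mem_cons_self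

theorem head_mem_vl' {G : Multigraph V E} (u : V) (w : List (Dart E)) : u ∈ G.vl u w :=
  List.mem_cons_self

theorem Wk.last_mem_vl {G : Multigraph V E} {u v : V} {w : List (Dart E)}
    (h : G.Wk u w v) : v ∈ G.vl u w := by
  rw [← h.dsrc_append]; exact List.mem_append_right _ (by simp)

theorem Wk.end_mem_tgt {G : Multigraph V E} {u v : V} {w : List (Dart E)}
    (h : G.Wk u w v) (hne : w ≠ []) : v ∈ w.map G.dtgt := by
  induction h with
  | nil => exact absurd rfl hne
  | cons hd hwk ih =>
      rcases hwk with _ | _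
      · simp
      · right; apply ih; simp

theorem Wk_append_iff {G : Multigraph V E} {u v : V} {w1 w2 : List (Dart E)} :
    G.Wk u (w1 ++ w2) v ↔ ∃ m, G.Wk u w1 m ∧ G.Wk m w2 v := by
  constructor
  · intro h
    induction w1 generalizing u with
    | nil => exact ⟨u, Wk.nil u, by simpa using h⟩
    | cons d l ih =>
        rcases h with _ | ⟨hd, h'⟩
        obtain ⟨m, hm1, hm2⟩ := ih h'
        exact ⟨m, Wk.cons hd hm1, hm2⟩
  · rintro ⟨m, h1, h2⟩; exact h1.append h2

theorem same_edge {G : Multigraph V E} {d d' : Dart E} (h : d.1 = d'.1) :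
    (G.dsrc d = G.dsrc d' ∧ G.dtgt d = G.dtgt d') ∨
    (G.dsrc d = G.dtgt d' ∧ G.dtgt d = G.dsrc d') := by
  rcases d with ⟨g, b⟩; rcases d' with ⟨g', b'⟩
  cases h
  cases b <;> cases b' <;> simp [dsrc, dtgt]

theorem edge_endpoints {G : Multigraph V E} {d : Dart E} :
    (G.dsrc d = G.src d.1 ∧ G.dtgt d = G.tgt d.1) ∨
    (G.dsrc d = G.tgt d.1 ∧ G.dtgt d = G.src d.1) := by
  rcases d with ⟨g, b⟩; cases b <;> simp [dsrc, dtgt]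

end Multigraph
namespace Multigraph

variable {V E : Type}

/-- Extract a path (nodup vertex list) from a walk. -/
theorem exists_path (G : Multigraph V E) :
    ∀ (n : ℕ) (w : List (Dart E)) (u v : V), w.length ≤ n → G.Wk u w v →
    ∃ p, G.Wk u p v ∧ (G.vl u p).Nodup ∧ ∀ d ∈ p, d ∈ w := by
  intro n
  induction n with
  | zero =>
      intro w u v hlen hw
      have : w = [] := List.length_eq_zero_iff.mp (Nat.le_zero.mp hlen)
      subst this
      exact ⟨[], hw, by simp [vl], by simp⟩
  | succ n ih =>
      intro w u v hlen hw
      rcases hw with _ | @⟨u, v, d, l, hd, hl⟩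
      · exact ⟨[], Wk.nil u, by simp [vl], by simp⟩
      by_cases hu : u ∈ (d :: l).map G.dtgt
      · obtain ⟨d', hd', hd'u⟩ := List.mem_map.mp hu
        obtain ⟨s, t, hst⟩ := List.append_of_mem hd'
        have hw' : G.Wk u (s ++ d' :: t) v := hst ▸ Wk.cons hd hl
        obtain ⟨m, hm1, hm2⟩ := Wk_append_iff.mp hw'
        rcases hm2 with _ | @⟨_, _, _, _, hd2, ht⟩
        rw [hd'u] at ht
        have hlt : t.length ≤ n := by
          have h1 := congrArg List.length hst
          simp at h1 hlen
          omega
        obtain ⟨p, hp1, hp2, hp3⟩ := ih t u v hlt ht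
        exact ⟨p, hp1, hp2, fun x hx => hst ▸ (by
          have := hp3 x hx
          simp [List.mem_append]
          tauto)⟩
      · obtain ⟨p, hp1, hp2, hp3⟩ := ih l (G.dtgt d) v (Nat.le_of_succ_le_succ hlen) hl
        refine ⟨d :: p, Wk.cons hd hp1, ?_, ?_⟩
        · rw [show G.vl u (d :: p) = u :: G.vl (G.dtgt d) p from rfl]
          refine List.nodup_cons.mpr ⟨?_, hp2⟩
          intro hmem
          rcases List.mem_cons.mp hmem with h1 | h1
          · exact hu (by rw [h1]; simp)
          · obtain ⟨d2, hd2, hd2t⟩ := List.mem_map.mp h1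
            exact hu (by
              rw [← hd2t]
              exact List.mem_map_of_mem (List.mem_cons_of_mem _ (hp3 d2 hd2)))
        · intro x hx
          rcases List.mem_cons.mp hx with h1 | h1
          · simp [h1]
          · exact List.mem_cons_of_mem _ (hp3 x h1)

/-- In a path, edge labels are nodup. -/
theorem nodup_fst {G : Multigraph V E} {u v : V} {p : List (Dart E)}
    (h : G.Wk u p v) (hnd : (G.vl u p).Nodup) : (p.map Prod.fst).Nodup := by
  induction h with
  | nil => simp
  | @cons u v d l hd hl ih =>
      have hnd' : (G.vl (G.dtgt d) l).Nodup := (List.nodup_cons.mp hnd).2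
      refine List.nodup_cons.mpr ⟨?_, ih hnd'⟩
      intro hmem
      obtain ⟨d', hd', hfst⟩ := List.mem_map.mp hmem
      have husrc : u ∉ G.vl (G.dtgt d) l := (List.nodup_cons.mp hnd).1
      have h1 := hl.mem_vl_src hd'
      have h2 := mem_vl_tgt (G := G) (u := G.dtgt d) hd'
      rcases same_edge (G := G) (hfst.symm ▸ rfl : d.1 = d'.1) with ⟨ha, _⟩ | ⟨ha, _⟩
      · exact husrc (hd ▸ ha ▸ h1)
      · exact husrc (hd ▸ ha ▸ h2)

/-- Split a path at a vertex on it. -/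
theorem split_path {G : Multigraph V E} {u v x : V} {p : List (Dart E)}
    (h : G.Wk u p v) (hnd : (G.vl u p).Nodup) (hx : x ∈ G.vl u p) :
    ∃ p1 p2, p = p1 ++ p2 ∧ G.Wk u p1 x ∧ G.Wk x p2 v ∧
      (G.vl u p1).Nodup ∧ (G.vl x p2).Nodup ∧
      (∀ y, y ∈ G.vl u p1 → y ∈ G.vl x p2 → y = x) := by
  have hsplit : ∃ p1 p2, p = p1 ++ p2 ∧ G.Wk u p1 x ∧ G.Wk x p2 v := by
    rcases List.mem_cons.mp hx with h1 | h1
    · subst h1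
      exact ⟨[], p, rfl, Wk.nil x, h⟩
    · obtain ⟨d', hd', hd'x⟩ := List.mem_map.mp h1
      obtain ⟨s, t, hst⟩ := List.append_of_mem hd'
      have hw' : G.Wk u (s ++ d' :: t) v := hst ▸ h
      obtain ⟨m, hm1, hm2⟩ := Wk_append_iff.mp hw'
      rcases hm2 with _ | @⟨_, _, _, _, hd2, ht⟩
      refine ⟨s ++ [d'], t, by simp [hst], ?_, hd'x ▸ ht⟩
      exact hm1.append (hd'x ▸ hd2 ▸ Wk.single)
  obtain ⟨p1, p2, rfl, h1, h2⟩ := hsplit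
  rw [vl_append] at hnd
  have hnodup := List.nodup_append'.mp hnd
  refine ⟨p1, p2, rfl, h1, h2, hnodup.1, ?_, ?_⟩
  · refine List.nodup_cons.mpr ⟨?_, hnodup.2.1⟩
    intro hmem
    exact hnodup.2.2 h1.last_mem_vl hmem
  · intro y hy1 hy2
    rcases List.mem_cons.mp hy2 with h3 | h3
    · exact h3
    · exact absurd h3 (hnodup.2.2 hy1)

/-- Prefix of a walk up to the first vertex in a set `S`. -/
theorem first_hit {G : Multigraph V E} {a : V} (S : Set V) :
    ∀ (R : List (Dart E)) (b : V), G.Wk b R a → a ∈ S →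
    ∃ p1 p2 x, R = p1 ++ p2 ∧ G.Wk b p1 x ∧ x ∈ S ∧
      ∀ y ∈ G.vl b p1, y ∈ S → y = x := by
  intro R
  induction R with
  | nil =>
      intro b hw ha
      refine ⟨[], [], b, rfl, Wk.nil b, hw.nil_eq ▸ ha, ?_⟩
      intro y hy _
      simpa [vl] using hy
  | cons d l ih =>
      intro b hw ha
      by_cases hb : b ∈ S
      · exact ⟨[], d :: l, b, rfl, Wk.nil b, hb, fun y hy _ => by simpa [vl] using hy⟩
      · rcases hw with _ | @⟨_, _, _, _, hd, hl⟩
        obtain ⟨p1, p2, x, heq, hw1, hxS, hmeet⟩ := ih (G.dtgt d) hl ha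
        refine ⟨d :: p1, p2, x, by simp [heq], Wk.cons hd hw1, hxS, ?_⟩
        intro y hy hyS
        rcases List.mem_cons.mp hy with h1 | h1
        · exact absurd (h1 ▸ hyS) hb
        · exact hmeet y h1 hyS

theorem Wk_iff_IsWalkFrom {G : Multigraph V E} {u v : V} {w : List (Dart E)} :
    G.Wk u w v ↔ G.IsWalkFrom w u v := by
  constructor
  · intro h
    induction h with
    | nil => exact ⟨List.isChain_nil, fun _ => rfl, by simp, by simp⟩
    | @cons u v d l hd hl ih =>
        obtain ⟨hc, he, hh, hlast⟩ := ih
        refine ⟨?_, by simp, ?_, ?_⟩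
        · refine List.isChain_cons.mpr ⟨?_, hc⟩
          intro d' hd'
          exact (hh d' hd').symm
        · simpa using hd
        · intro dl hdl
          rcases List.eq_nil_or_concat l with rfl | ⟨l', d2, rfl⟩
          · simp at hdl
            subst hdl
            exact hl.nil_eq
          · have h3 : (d :: l'.concat d2).getLast? = some d2 := by
              rw [List.concat_eq_append, ← List.cons_append, List.getLast?_concat]
            have h4 : (l'.concat d2).getLast? = some d2 := by
              rw [List.concat_eq_append, List.getLast?_concat]
            rw [h3] at hdl
            simp at hdl
            subst hdl
            exact hlast _ (by rw [h4]; rfl)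
  · intro h
    induction w generalizing u with
    | nil => exact (h.2.1 rfl) ▸ Wk.nil u
    | cons d l ih =>
        obtain ⟨hc, _, hh, hlast⟩ := h
        have hd : G.dsrc d = u := hh d (by simp)
        refine Wk.cons hd (ih ?_)
        obtain ⟨hcd, hc'⟩ := List.isChain_cons.mp hc
        refine ⟨hc', ?_, ?_, ?_⟩
        · intro hl
          subst hl
          have := hlast d (by simp)
          simpa using this
        · intro d' hd'
          have : l ≠ [] := by
            intro h0; rw [h0] at hd'; simp at hd'
          have hhead : l.head? = some d' := hd'
          exact (hcd d' hd').symm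
        · intro dl hdl
          apply hlast
          rcases List.eq_nil_or_concat l with rfl | ⟨l', d2, rfl⟩
          · simp at hdl
          · have h3 : (d :: l'.concat d2).getLast? = some d2 := by
              rw [List.concat_eq_append, ← List.cons_append, List.getLast?_concat]
            have h4 : (l'.concat d2).getLast? = some d2 := by
              rw [List.concat_eq_append, List.getLast?_concat]
            rw [h3]
            rw [h4] at hdl
            exact hdl

end Multigraph
namespace Multigraph

variable {V E : Type}

theorem chain_nil : chain ([] : List (Dart E)) = 0 := rfl

theorem chain_cons (d : Dart E) (w : List (Dart E)) :
    chain (d :: w) = dartChain d + chain w := by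
  simp [chain]

theorem chain_append (w1 w2 : List (Dart E)) :
    chain (w1 ++ w2) = chain w1 + chain w2 := by
  simp [chain]

theorem dartChain_fd (d : Dart E) : dartChain (fd d) = -dartChain d := by
  funext g
  rcases d with ⟨e', b⟩
  cases b <;> simp [dartChain, fd] <;> split <;> simp

theorem chain_rev (w : List (Dart E)) : chain (rev w) = -chain w := by
  induction w with
  | nil => simp [chain_nil]
  | cons d l ih =>
      rw [rev_cons, chain_append, chain_cons, ih, chain_cons, chain_nil, dartChain_fd]
      abel

theorem walkLength_cons (l : E → ℝ) (d : Dart E) (w : List (Dart E)) :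
    walkLength l (d :: w) = l d.1 + walkLength l w := by
  simp [walkLength]

theorem walkLength_append (l : E → ℝ) (w1 w2 : List (Dart E)) :
    walkLength l (w1 ++ w2) = walkLength l w1 + walkLength l w2 := by
  simp [walkLength]

theorem walkLength_rev (l : E → ℝ) (w : List (Dart E)) :
    walkLength l (rev w) = walkLength l w := by
  have : (List.map ((fun d => l d.1) ∘ fd) w) = List.map (fun d => l d.1) w := by
    apply List.map_congr_left
    intro d _
    simp
  simp [walkLength, rev, List.map_reverse, List.map_map, this, List.sum_reverse]

theorem mem_edges {w : List (Dart E)} {g : E} :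
    g ∈ Multigraph.edges w ↔ g ∈ w.map Prod.fst := by
  constructor
  · rintro ⟨b, hb⟩
    exact List.mem_map.mpr ⟨(g, b), hb, rfl⟩
  · intro h
    obtain ⟨d, hd, rfl⟩ := List.mem_map.mp h
    exact ⟨d.2, hd⟩

theorem mem_vertsOf {G : Multigraph V E} {w : List (Dart E)} {y : V} :
    y ∈ G.vertsOf w ↔ y ∈ w.map G.dsrc := by
  constructor
  · rintro ⟨d, hd, rfl⟩
    exact List.mem_map.mpr ⟨d, hd, rfl⟩
  · intro h
    obtain ⟨d, hd, rfl⟩ := List.mem_map.mp h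
    exact ⟨d, hd, rfl⟩

theorem isClosedWalk_of_Wk {G : Multigraph V E} {u : V} {w : List (Dart E)}
    (h : G.Wk u w u) (hne : w ≠ []) : G.IsClosedWalk w := by
  obtain ⟨hc, _, hh, hlast⟩ := Wk_iff_IsWalkFrom.mp h
  refine ⟨hne, hc, ?_⟩
  intro dl hdl dh hdh
  rw [hlast dl hdl, hh dh hdh]

/-- Build a cycle from a dart plus a return path. -/
theorem cycle_cons {G : Multigraph V E} {u v : V} {d : Dart E} {w : List (Dart E)}
    (hd : G.dsrc d = u) (ht : G.dtgt d = v) (hW : G.Wk v w u)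
    (hnd : (G.vl v w).Nodup) (hfst : (w.map Prod.fst).Nodup)
    (hdw : d.1 ∉ w.map Prod.fst) : G.IsCycle (d :: w) := by
  have hwk : G.Wk u (d :: w) u := Wk.cons hd (ht ▸ hW)
  refine ⟨isClosedWalk_of_Wk hwk (by simp), ?_, ?_⟩
  · exact List.nodup_cons.mpr ⟨hdw, hfst⟩
  · have h1 : (d :: w).map G.dsrc = u :: w.map G.dsrc := by simp [hd]
    rw [h1]
    refine List.nodup_cons.mpr ⟨?_, ?_⟩
    · intro hmem
      have h2 := hW.dsrc_append
      rw [← h2] at hnd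
      have := (List.nodup_append'.mp hnd).2.2 hmem (by simp)
      simp at this
    · have h2 := hW.dsrc_append
      rw [← h2] at hnd
      exact (List.nodup_append'.mp hnd).1

/-- Build a cycle from two vertex- and edge-disjoint paths. -/
theorem cycle_glue {G : Multigraph V E} {u v : V} {P Q : List (Dart E)}
    (hP : G.Wk u P v) (hQ : G.Wk u Q v)
    (hPnd : (G.vl u P).Nodup) (hQnd : (G.vl u Q).Nodup)
    (hmeet : ∀ y, y ∈ G.vl u P → y ∈ G.vl u Q → y = u ∨ y = v)
    (hdisj : ∀ d ∈ P, ∀ d' ∈ Q, d.1 ≠ d'.1)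
    (hne : u ≠ v) : G.IsCycle (Q ++ rev P) := by
  have hrev : G.Wk v (rev P) u := hP.reverse
  have hQne : Q ≠ [] := by rintro rfl; exact hne hQ.nil_eq
  have hwk : G.Wk u (Q ++ rev P) u := hQ.append hrev
  have hvlrev : G.vl v (rev P) = (G.vl u P).reverse := hP.vl_rev
  refine ⟨isClosedWalk_of_Wk hwk (by simp [hQne]), ?_, ?_⟩
  · rw [List.map_append, map_fst_rev]
    refine List.nodup_append'.mpr ⟨nodup_fst hQ hQnd, List.nodup_reverse.mpr (nodup_fst hP hPnd), ?_⟩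
    intro g hg hg'
    rw [List.mem_reverse] at hg'
    obtain ⟨dq, hdq, rfl⟩ := List.mem_map.mp hg
    obtain ⟨dp, hdp, hfst⟩ := List.mem_map.mp hg'
    exact hdisj dp hdp dq hdq hfst
  · rw [List.map_append]
    have hQd := hQ.dsrc_append
    have hrevd := hrev.dsrc_append
    have hQsplit := List.nodup_append'.mp (hQd ▸ hQnd)
    have hrevnd : (G.vl v (rev P)).Nodup := by rw [hvlrev]; exact List.nodup_reverse.mpr hPnd
    have hrsplit := List.nodup_append'.mp (hrevd ▸ hrevnd)
    refine List.nodup_append'.mpr ⟨hQsplit.1, hrsplit.1, ?_⟩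
    intro y hy hy'
    have hyQ : y ∈ G.vl u Q := by rw [← hQd]; exact List.mem_append_left _ hy
    have hyP : y ∈ G.vl u P := by
      have : y ∈ G.vl v (rev P) := by rw [← hrevd]; exact List.mem_append_left _ hy'
      rw [hvlrev, List.mem_reverse] at this; exact this
    rcases hmeet y hyP hyQ with rfl | rfl
    · exact hrsplit.2.2 hy' (by simp)
    · exact hQsplit.2.2 hy (by simp)

end Multigraph
namespace Multigraph

variable {V E : Type}

theorem edge_verts_mem {G : Multigraph V E} {u v : V} {w : List (Dart E)} {g : E}
    (h : G.Wk u w v) {d : Dart E} (hd : d ∈ w) (hdg : d.1 = g) :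
    G.src g ∈ G.vl u w ∧ G.tgt g ∈ G.vl u w := by
  have h1 := h.mem_vl_src hd
  have h2 := mem_vl_tgt (G := G) (u := u) hd
  rcases edge_endpoints (G := G) (d := d) with ⟨e1, e2⟩ | ⟨e1, e2⟩
  · rw [hdg] at e1 e2; exact ⟨e1 ▸ h1, e2 ▸ h2⟩
  · rw [hdg] at e1 e2; exact ⟨e2 ▸ h2, e1 ▸ h1⟩

/-- Two internally-disjoint, edge-disjoint paths from `a` to `b` avoiding edge `e`. -/
def TP (G : Multigraph V E) (e : E) (a b : V) : Prop :=
  ∃ P Q, G.Wk a P b ∧ (G.vl a P).Nodup ∧ G.Wk a Q b ∧ (G.vl a Q).Nodup ∧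
    (∀ d ∈ P, d.1 ≠ e) ∧ (∀ d ∈ Q, d.1 ≠ e) ∧
    (∀ y, y ∈ G.vl a P → y ∈ G.vl a Q → y = a ∨ y = b) ∧
    (∀ d ∈ P, ∀ d' ∈ Q, d.1 ≠ d'.1)

theorem adjBase {G : Multigraph V E} {e : E}
    (hA : ∀ x a b : V, a ≠ x → b ≠ x →
      ∃ w, G.Wk a w b ∧ x ∉ G.vl a w ∧ ∀ d ∈ w, d.1 ≠ e)
    (h4 : ∀ x y z : V, ∃ t, t ≠ x ∧ t ≠ y ∧ t ≠ z)
    {a b : V} {f : Dart E} (hab : a ≠ b) (hfs : G.dsrc f = a) (hft : G.dtgt f = b)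
    (hfe : f.1 ≠ e) : TP G e a b := by
  obtain ⟨z, hza, hzb, -⟩ := h4 a b b
  obtain ⟨w1, hw1, hbw1, hew1⟩ := hA b z a hzb hab
  obtain ⟨w2, hw2, haw2, hew2⟩ := hA a z b hza (Ne.symm hab)
  have hQ0 : G.Wk a (rev w1 ++ w2) b := hw1.reverse.append hw2
  obtain ⟨Q, hQ, hQnd, hQmem⟩ := exists_path G (rev w1 ++ w2).length _ a b le_rfl hQ0
  have hP : G.Wk a [f] b := by rw [← hfs, ← hft]; exact Wk.single
  have hvlP : G.vl a [f] = [a, b] := by simp [vl, hft]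
  refine ⟨[f], Q, hP, by rw [hvlP]; simp [hab], hQ, hQnd, ?_, ?_, ?_, ?_⟩
  · intro d hd; simp at hd; subst hd; exact hfe
  · intro d hd
    rcases List.mem_append.mp (hQmem d hd) with h1 | h1
    · have := hew1 (fd d) (mem_rev.mp h1); simpa using this
    · exact hew2 d h1
  · intro y hy _
    rw [hvlP] at hy
    simpa using hy
  · intro d hd d' hd' hcon
    simp at hd; subst hd
    rcases List.mem_append.mp (hQmem d' hd') with h1 | h1
    · -- d' in rev w1, which avoids b
      have hmem := mem_rev.mp h1
      have := edge_verts_mem (g := d.1) hw1 hmem (by simp [hcon])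
      -- b is an endpoint of d.1
      rcases edge_endpoints (G := G) (d := d) with ⟨e1, e2⟩ | ⟨e1, e2⟩
      · exact hbw1 (by rw [← hft, e2]; exact this.2)
      · exact hbw1 (by rw [← hft, e2]; exact this.1)
    · have := edge_verts_mem (g := d.1) hw2 h1 hcon.symm
      rcases edge_endpoints (G := G) (d := d) with ⟨e1, e2⟩ | ⟨e1, e2⟩
      · exact haw2 (by rw [← hfs, e1]; exact this.1)
      · exact haw2 (by rw [← hfs, e1]; exact this.2)

theorem extend1 {G : Multigraph V E} {e : E} {a w b : V} {P Q : List (Dart E)} {f : Dart E}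
    (hP : G.Wk a P w) (hPnd : (G.vl a P).Nodup)
    (hQ : G.Wk a Q w) (hQnd : (G.vl a Q).Nodup)
    (hPe : ∀ d ∈ P, d.1 ≠ e) (hQe : ∀ d ∈ Q, d.1 ≠ e)
    (hmeet : ∀ y, y ∈ G.vl a P → y ∈ G.vl a Q → y = a ∨ y = w)
    (hdisj : ∀ d ∈ P, ∀ d' ∈ Q, d.1 ≠ d'.1)
    (hb : b ∈ G.vl a P) (hbQ : b ∉ G.vl a Q) (hbw : b ≠ w)
    (hfs : G.dsrc f = w) (hft : G.dtgt f = b) (hfe : f.1 ≠ e) : TP G e a b := by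
  obtain ⟨P1, P2, rfl, h1, h2, hnd1, hnd2, hm12⟩ := split_path hP hPnd hb
  have hwP2 : w ∈ G.vl b P2 := h2.last_mem_vl
  have hQ' : G.Wk a (Q ++ [f]) b := hQ.append (by rw [← hfs, ← hft]; exact Wk.single)
  have hvlQ' : G.vl a (Q ++ [f]) = G.vl a Q ++ [b] := by simp [vl_append, hft]
  have hQ'nd : (G.vl a (Q ++ [f])).Nodup := by
    rw [hvlQ']
    exact List.nodup_append'.mpr ⟨hQnd, by simp, by intro y hy hy'; simp at hy'; subst hy'; exact hbQ hy⟩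
  refine ⟨P1, Q ++ [f], h1, hnd1, hQ', hQ'nd, ?_, ?_, ?_, ?_⟩
  · intro d hd; exact hPe d (List.mem_append_left _ hd)
  · intro d hd
    rcases List.mem_append.mp hd with h3 | h3
    · exact hQe d h3
    · simp at h3; subst h3; exact hfe
  · intro y hy1 hy2
    rw [hvlQ'] at hy2
    rcases List.mem_append.mp hy2 with h3 | h3
    · have hyP : y ∈ G.vl a (P1 ++ P2) := by
        rw [vl_append]; exact List.mem_append_left _ hy1
      rcases hmeet y hyP h3 with h4 | h4
      · exact Or.inl h4
      · exact absurd (hm12 w (h4 ▸ hy1) hwP2) hbw.symm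
    · simp at h3; exact Or.inr h3
  · intro d hd d' hd' hcon
    rcases List.mem_append.mp hd' with h3 | h3
    · exact hdisj d (List.mem_append_left _ hd) d' h3 hcon
    · simp at h3; subst h3
      -- d.1 = d'.1, so w (= dsrc d') is an endpoint of d, hence w ∈ vl a P1
      have hmem := edge_verts_mem (g := d'.1) h1 hd hcon
      have hwvl : w ∈ G.vl a P1 := by
        rcases edge_endpoints (G := G) (d := d') with ⟨e1, e2⟩ | ⟨e1, e2⟩
        · rw [← hfs, e1]; exact hmem.1
        · rw [← hfs, e1]; exact hmem.2
      exact hbw.symm (hm12 w hwvl hwP2)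

theorem extend2 {G : Multigraph V E} {e : E} {a w b x : V} {P Q R1 : List (Dart E)}
    {f : Dart E}
    (hloop : ∀ g : E, G.src g ≠ G.tgt g)
    (hP : G.Wk a P w) (hPnd : (G.vl a P).Nodup)
    (hQ : G.Wk a Q w) (hQnd : (G.vl a Q).Nodup)
    (hPe : ∀ d ∈ P, d.1 ≠ e) (hQe : ∀ d ∈ Q, d.1 ≠ e)
    (hmeet : ∀ y, y ∈ G.vl a P → y ∈ G.vl a Q → y = a ∨ y = w)
    (hdisj : ∀ d ∈ P, ∀ d' ∈ Q, d.1 ≠ d'.1)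
    (hbP : b ∉ G.vl a P) (hbQ : b ∉ G.vl a Q) (hbw : b ≠ w)
    (hR : G.Wk b R1 x) (hRnd : (G.vl b R1).Nodup)
    (hRe : ∀ d ∈ R1, d.1 ≠ e)
    (hwR : w ∉ G.vl b R1)
    (hxP : x ∈ G.vl a P)
    (hRmeet : ∀ y ∈ G.vl b R1, (y ∈ G.vl a P ∨ y ∈ G.vl a Q) → y = x)
    (hfs : G.dsrc f = w) (hft : G.dtgt f = b) (hfe : f.1 ≠ e) : TP G e a b := by
  have hxw : x ≠ w := fun h => hwR (h ▸ hR.last_mem_vl)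
  obtain ⟨P1, P2, rfl, h1, h2, hnd1, hnd2, hm12⟩ := split_path hP hPnd hxP
  have hwP2 : w ∈ G.vl x P2 := h2.last_mem_vl
  have hP1sub : ∀ y ∈ G.vl a P1, y ∈ G.vl a (P1 ++ P2) := by
    intro y hy; rw [vl_append]; exact List.mem_append_left _ hy
  -- reverse of R1
  have hrev : G.Wk x (rev R1) b := hR.reverse
  have hvlrev : G.vl x (rev R1) = (G.vl b R1).reverse := hR.vl_rev
  have hxcons : x :: (rev R1).map G.dtgt = (G.vl b R1).reverse := hvlrev
  have hrevnd : (x :: (rev R1).map G.dtgt).Nodup := by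
    rw [hxcons]; exact List.nodup_reverse.mpr hRnd
  have htailsub : ∀ y ∈ (rev R1).map G.dtgt, y ∈ G.vl b R1 := by
    intro y hy
    have : y ∈ (G.vl b R1).reverse := by rw [← hxcons]; exact List.mem_cons_of_mem _ hy
    simpa using this
  -- new P
  have hPnew : G.Wk a (P1 ++ rev R1) b := h1.append hrev
  have hPnewnd : (G.vl a (P1 ++ rev R1)).Nodup := by
    rw [vl_append]
    refine List.nodup_append'.mpr ⟨hnd1, (List.nodup_cons.mp hrevnd).2, ?_⟩
    intro y hy hy'
    have hyR := htailsub y hy'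
    have : y = x := hRmeet y hyR (Or.inl (hP1sub y hy))
    subst this
    exact (List.nodup_cons.mp hrevnd).1 hy'
  -- new Q
  have hQ' : G.Wk a (Q ++ [f]) b := hQ.append (by rw [← hfs, ← hft]; exact Wk.single)
  have hvlQ' : G.vl a (Q ++ [f]) = G.vl a Q ++ [b] := by simp [vl_append, hft]
  have hQ'nd : (G.vl a (Q ++ [f])).Nodup := by
    rw [hvlQ']
    exact List.nodup_append'.mpr ⟨hQnd, by simp, by intro y hy hy'; simp at hy'; subst hy'; exact hbQ hy⟩
  refine ⟨P1 ++ rev R1, Q ++ [f], hPnew, hPnewnd, hQ', hQ'nd, ?_, ?_, ?_, ?_⟩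
  · intro d hd
    rcases List.mem_append.mp hd with h3 | h3
    · exact hPe d (List.mem_append_left _ h3)
    · have := hRe (fd d) (mem_rev.mp h3); simpa using this
  · intro d hd
    rcases List.mem_append.mp hd with h3 | h3
    · exact hQe d h3
    · simp at h3; subst h3; exact hfe
  · intro y hy1 hy2
    rw [hvlQ'] at hy2
    rcases List.mem_append.mp hy2 with h3 | h3
    · rw [vl_append] at hy1
      rcases List.mem_append.mp hy1 with h4 | h4
      · rcases hmeet y (hP1sub y h4) h3 with h5 | h5
        · exact Or.inl h5
        · exact absurd (hm12 w (h5 ▸ h4) hwP2) hxw.symm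
      · have hyx : y = x := hRmeet y (htailsub y h4) (Or.inr h3)
        subst hyx
        rcases hmeet y hxP h3 with h5 | h5
        · exact Or.inl h5
        · exact absurd h5 hxw
    · simp at h3; exact Or.inr h3
  · intro d hd d' hd' hcon
    rcases List.mem_append.mp hd with h3 | h3
    · -- d ∈ P1
      rcases List.mem_append.mp hd' with h4 | h4
      · exact hdisj d (List.mem_append_left _ h3) d' h4 hcon
      · simp at h4; subst h4
        have hmem := edge_verts_mem (g := d'.1) h1 h3 hcon
        have hwvl : w ∈ G.vl a P1 := by
          rcases edge_endpoints (G := G) (d := d') with ⟨e1, e2⟩ | ⟨e1, e2⟩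
          · rw [← hfs, e1]; exact hmem.1
          · rw [← hfs, e1]; exact hmem.2
        exact hxw (hm12 w hwvl hwP2).symm
    · -- d ∈ rev R1
      have hmemR : fd d ∈ R1 := mem_rev.mp h3
      rcases List.mem_append.mp hd' with h4 | h4
      · -- d' ∈ Q : shared edge forces a loop
        have hend := edge_verts_mem (g := d'.1) hR hmemR (by simp [hcon])
        have hendQ := edge_verts_mem hQ h4 rfl
        have hs : G.src d'.1 = x := hRmeet _ hend.1 (Or.inr hendQ.1)
        have ht : G.tgt d'.1 = x := hRmeet _ hend.2 (Or.inr hendQ.2)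
        exact hloop d'.1 (hs.trans ht.symm)
      · simp at h4; subst h4
        -- shared edge with d': w is an endpoint, but w ∉ vl b R1
        have hend := edge_verts_mem (g := d'.1) hR hmemR (by simp [hcon])
        rcases edge_endpoints (G := G) (d := d') with ⟨e1, e2⟩ | ⟨e1, e2⟩
        · exact hwR (by rw [← hfs, e1]; exact hend.1)
        · exact hwR (by rw [← hfs, e1]; exact hend.2)

theorem whitney {G : Multigraph V E} {e : E}
    (hloop : ∀ g : E, G.src g ≠ G.tgt g)
    (hA : ∀ x a b : V, a ≠ x → b ≠ x →
      ∃ w, G.Wk a w b ∧ x ∉ G.vl a w ∧ ∀ d ∈ w, d.1 ≠ e)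
    (h4 : ∀ x y z : V, ∃ t, t ≠ x ∧ t ≠ y ∧ t ≠ z) :
    ∀ (n : ℕ) (a b : V), a ≠ b →
      (∃ p, G.Wk a p b ∧ (G.vl a p).Nodup ∧ (∀ d ∈ p, d.1 ≠ e) ∧ p.length ≤ n) →
      TP G e a b := by
  intro n
  induction n with
  | zero =>
      rintro a b hab ⟨p, hp, -, -, hlen⟩
      have : p = [] := List.length_eq_zero_iff.mp (Nat.le_zero.mp hlen)
      subst this
      exact absurd hp.nil_eq hab
  | succ n ih =>
      rintro a b hab ⟨p, hp, hpnd, hpe, hlen⟩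
      rcases List.eq_nil_or_concat p with rfl | ⟨p', f, rfl⟩
      · exact absurd hp.nil_eq hab
      rw [List.concat_eq_append] at hp hpnd hpe hlen
      obtain ⟨m, hm1, hm2⟩ := Wk_append_iff.mp hp
      rcases hm2 with _ | @⟨_, _, _, _, hfs, hrest⟩
      have hft : G.dtgt f = b := hrest.nil_eq
      have hfe : f.1 ≠ e := hpe f (by simp)
      rcases eq_or_ne p' [] with rfl | hne
      · exact adjBase hA h4 hab (hfs.trans hm1.nil_eq.symm) hft hfe
      · rw [vl_append] at hpnd
        have hndsplit := List.nodup_append'.mp hpnd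
        have hwmem : m ∈ p'.map G.dtgt := hm1.end_mem_tgt hne
        have haw : a ≠ m := fun h =>
          (List.nodup_cons.mp hndsplit.1).1 (h ▸ hwmem)
        have hbw : b ≠ m := by
          intro hbm
          refine hndsplit.2.2 (List.mem_cons_of_mem _ hwmem) ?_
          simp [hft]
          exact hbm.symm
        have hp'e : ∀ d ∈ p', d.1 ≠ e := fun d hd => hpe d (List.mem_append_left _ hd)
        have hp'len : p'.length ≤ n := by simp at hlen; omega
        obtain ⟨P, Q, hP, hPnd, hQ, hQnd, hPe, hQe, hmeet, hdisj⟩ :=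
          ih a m haw ⟨p', hm1, hndsplit.1, hp'e, hp'len⟩
        by_cases hbP : b ∈ G.vl a P
        · have hbQ : b ∉ G.vl a Q := by
            intro hbQ
            rcases hmeet b hbP hbQ with h | h
            · exact hab h.symm
            · exact hbw h
          exact extend1 hP hPnd hQ hQnd hPe hQe hmeet hdisj hbP hbQ hbw hfs hft hfe
        by_cases hbQ : b ∈ G.vl a Q
        · exact extend1 hQ hQnd hP hPnd hQe hPe (fun y h1 h2 => hmeet y h2 h1)
            (fun d hd d' hd' => (hdisj d' hd' d hd).symm) hbQ hbP hbw hfs hft hfe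
        · -- b is on neither path: connect b to the paths avoiding m
          obtain ⟨R0, hR0, hwR0, hR0e⟩ := hA m b a hbw haw
          obtain ⟨R0p, hR0p, hR0pnd, hR0pmem⟩ := exists_path G R0.length R0 b a le_rfl hR0
          have hR0pe : ∀ d ∈ R0p, d.1 ≠ e := fun d hd => hR0e d (hR0pmem d hd)
          have hvlsub : ∀ y ∈ G.vl b R0p, y ∈ G.vl b R0 := by
            intro y hy
            rcases List.mem_cons.mp hy with h | h
            · exact h ▸ List.mem_cons_self
            · obtain ⟨d, hd, rfl⟩ := List.mem_map.mp h
              exact mem_vl_tgt (hR0pmem d hd)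
          obtain ⟨p1, p2, x, heq, hw1, hxS, hmeet1⟩ :=
            first_hit {y | y ∈ G.vl a P ∨ y ∈ G.vl a Q} R0p b hR0p
              (Or.inl hP.head_mem_vl)
          have hvl1 : (G.vl b p1).Nodup := by
            rw [heq, vl_append] at hR0pnd
            exact (List.nodup_append'.mp hR0pnd).1
          have hp1sub : ∀ y ∈ G.vl b p1, y ∈ G.vl b R0p := by
            intro y hy
            rw [heq, vl_append]
            exact List.mem_append_left _ hy
          have hp1e : ∀ d ∈ p1, d.1 ≠ e := fun d hd =>
            hR0pe d (heq ▸ List.mem_append_left _ hd)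
          have hwp1 : m ∉ G.vl b p1 := fun h => hwR0 (hvlsub m (hp1sub m h))
          rcases hxS with hxP | hxQ
          · exact extend2 hloop hP hPnd hQ hQnd hPe hQe hmeet hdisj hbP hbQ hbw
              hw1 hvl1 hp1e hwp1 hxP hmeet1 hfs hft hfe
          · exact extend2 hloop hQ hQnd hP hPnd hQe hPe
              (fun y h1 h2 => hmeet y h2 h1)
              (fun d hd d' hd' => (hdisj d' hd' d hd).symm)
              hbQ hbP hbw hw1 hvl1 hp1e hwp1 hxQ
              (fun y hy hor => hmeet1 y hy (Or.symm hor)) hfs hft hfe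

end Multigraph
namespace Multigraph

variable {V E : Type}

theorem deleteVerts_dsrc (G : Multigraph V E) (X : Set V)
    (d : Dart {e // G.src e ∉ X ∧ G.tgt e ∉ X}) :
    ((G.deleteVerts X).dsrc d).1 = G.dsrc (d.1.1, d.2) := by
  rcases d with ⟨g, b⟩; cases b <;> rfl

theorem deleteVerts_dtgt (G : Multigraph V E) (X : Set V)
    (d : Dart {e // G.src e ∉ X ∧ G.tgt e ∉ X}) :
    ((G.deleteVerts X).dtgt d).1 = G.dtgt (d.1.1, d.2) := by
  rcases d with ⟨g, b⟩; cases b <;> rfl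

theorem deleteVerts_wk {G : Multigraph V E} {X : Set V}
    {w : List (Dart {e // G.src e ∉ X ∧ G.tgt e ∉ X})} {a b : {v // v ∉ X}}
    (h : (G.deleteVerts X).Wk a w b) :
    G.Wk a.1 (w.map fun d => (d.1.1, d.2)) b.1 ∧
      ∀ y ∈ G.vl a.1 (w.map fun d => (d.1.1, d.2)), y ∉ X := by
  induction h with
  | nil u =>
      refine ⟨Wk.nil _, ?_⟩
      intro y hy
      rcases List.mem_cons.mp hy with h | h
      · exact h ▸ u.2
      · simp at h
  | @cons u v d l hd hl ih =>
      have hsrc : G.dsrc (d.1.1, d.2) = u.1 := by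
        rw [← deleteVerts_dsrc, hd]
      have htgt : G.dtgt (d.1.1, d.2) = ((G.deleteVerts X).dtgt d).1 :=
        (deleteVerts_dtgt G X d).symm
      constructor
      · exact Wk.cons hsrc (by rw [htgt]; exact ih.1)
      · intro y hy
        rcases List.mem_cons.mp hy with h | h
        · exact h ▸ u.2
        · apply ih.2
          rw [List.map_cons] at h
          rcases List.mem_cons.mp h with h2 | h2
          · rw [h2, htgt]; exact List.mem_cons_self
          · exact List.mem_cons_of_mem _ h2

end Multigraph
/-- in a 3-connected graph with positive edge lengths and no loops, every
edge `e` lies on two cycles `c₁, c₂` that share only `e` and its endpoints; with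
`c₃` homologous to `c₁ - c₂` and made of the remaining edges, one recovers
`l(e) = (l(c₁) + l(c₂) - l(c₃))/2`. -/
theorem stmt17 {V E : Type} [Fintype V] [Fintype E] (G : Multigraph V E)
    (l : E → ℝ) (hl : ∀ e, 0 < l e)
    (hloop : ∀ e, G.src e ≠ G.tgt e)
    (hcard : 3 < Fintype.card V)
    (h3conn : ∀ X : Finset V, X.card < 3 → (G.deleteVerts (X : Set V)).Conn)
    (e : E) :
    ∃ c1 c2 c3 : List (Dart E),
      G.IsCycle c1 ∧ G.IsCycle c2 ∧ G.IsCycle c3 ∧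
      (e, true) ∈ c1 ∧ (e, true) ∈ c2 ∧
      (Multigraph.edges c1 ∩ Multigraph.edges c2 = {e}) ∧
      (G.vertsOf c1 ∩ G.vertsOf c2 = {G.src e, G.tgt e}) ∧
      Multigraph.chain c3 = Multigraph.chain c1 - Multigraph.chain c2 ∧
      Multigraph.edges c3 = (Multigraph.edges c1 ∪ Multigraph.edges c2) \ {e} ∧
      l e = (Multigraph.walkLength l c1 + Multigraph.walkLength l c2
              - Multigraph.walkLength l c3) / 2 := by
  classical
  have h4 : ∀ x y z : V, ∃ t, t ≠ x ∧ t ≠ y ∧ t ≠ z := by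
    intro x y z
    by_contra hcon
    push_neg at hcon
    have hsub : (Finset.univ : Finset V) ⊆ {x, y, z} := by
      intro t _
      simp only [Finset.mem_insert, Finset.mem_singleton]
      rcases eq_or_ne t x with h | h
      · exact Or.inl h
      rcases eq_or_ne t y with h2 | h2
      · exact Or.inr (Or.inl h2)
      · exact Or.inr (Or.inr (hcon t h h2))
    have h1 := Finset.card_le_card hsub
    have h2 := Finset.card_insert_le x ({y, z} : Finset V)
    have h3 := Finset.card_insert_le y ({z} : Finset V)
    rw [Finset.card_univ] at h1
    simp at h3
    omega
  have conn2 : ∀ x y a b : V, a ≠ x → a ≠ y → b ≠ x → b ≠ y →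
      ∃ w, G.Wk a w b ∧ x ∉ G.vl a w ∧ y ∉ G.vl a w := by
    intro x y a b hax hay hbx hby
    have hcard2 : ({x, y} : Finset V).card < 3 := by
      have := Finset.card_insert_le x ({y} : Finset V)
      simp at this
      omega
    have hconn := h3conn {x, y} hcard2
    have ha : a ∉ (({x, y} : Finset V) : Set V) := by simp [hax, hay]
    have hb : b ∉ (({x, y} : Finset V) : Set V) := by simp [hbx, hby]
    obtain ⟨w', hw'⟩ := hconn ⟨a, ha⟩ ⟨b, hb⟩
    obtain ⟨hWk, hvl⟩ := Multigraph.deleteVerts_wk (Multigraph.Wk_iff_IsWalkFrom.mpr hw')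
    refine ⟨_, hWk, fun hx => ?_, fun hy => ?_⟩
    · exact hvl x hx (by simp)
    · exact hvl y hy (by simp)
  have hA : ∀ x a b : V, a ≠ x → b ≠ x →
      ∃ w, G.Wk a w b ∧ x ∉ G.vl a w ∧ ∀ d ∈ w, d.1 ≠ e := by
    intro x a b hax hbx
    rcases eq_or_ne x (G.src e) with rfl | hxu
    · obtain ⟨w, h1, h2, -⟩ := conn2 _ _ a b hax hax hbx hbx
      exact ⟨w, h1, h2, fun d hd hdg => h2 ((Multigraph.edge_verts_mem h1 hd hdg).1)⟩
    rcases eq_or_ne x (G.tgt e) with rfl | hxv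
    · obtain ⟨w, h1, h2, -⟩ := conn2 _ _ a b hax hax hbx hbx
      exact ⟨w, h1, h2, fun d hd hdg => h2 ((Multigraph.edge_verts_mem h1 hd hdg).2)⟩
    have key : ∀ t : V, t ≠ x →
        ∃ w, G.Wk t w (G.src e) ∧ x ∉ G.vl t w ∧ ∀ d ∈ w, d.1 ≠ e := by
      intro t htx
      rcases eq_or_ne t (G.src e) with rfl | htu
      · refine ⟨[], Multigraph.Wk.nil _, ?_, by simp⟩
        intro hmem
        rcases List.mem_cons.mp hmem with h | h
        · exact htx h.symm
        · simp at h
      rcases eq_or_ne t (G.tgt e) with rfl | htv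
      · obtain ⟨z, hz1, hz2, hz3⟩ := h4 x (G.src e) (G.tgt e)
        obtain ⟨w1, hw1, hw1x, hw1u⟩ :=
          conn2 x (G.src e) (G.tgt e) z htx (Ne.symm (hloop e)) hz1 hz2
        obtain ⟨w2, hw2, hw2x, hw2v⟩ :=
          conn2 x (G.tgt e) z (G.src e) hz1 hz3 (Ne.symm hxu) (hloop e)
        refine ⟨w1 ++ w2, hw1.append hw2, ?_, ?_⟩
        · rw [Multigraph.vl_append]
          intro hmem
          rcases List.mem_append.mp hmem with h | h
          · exact hw1x h
          · exact hw2x (List.mem_cons_of_mem _ h)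
        · intro d hd
          rcases List.mem_append.mp hd with h | h
          · exact fun hdg => hw1u ((Multigraph.edge_verts_mem hw1 h hdg).1)
          · exact fun hdg => hw2v ((Multigraph.edge_verts_mem hw2 h hdg).2)
      · obtain ⟨w1, hw1, hx1, hv1⟩ :=
          conn2 x (G.tgt e) t (G.src e) htx htv (Ne.symm hxu) (hloop e)
        exact ⟨w1, hw1, hx1, fun d hd hdg => hv1 ((Multigraph.edge_verts_mem hw1 hd hdg).2)⟩
    obtain ⟨wa, hwa, hwax, hwae⟩ := key a hax
    obtain ⟨wb, hwb, hwbx, hwbe⟩ := key b hbx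
    refine ⟨wa ++ Multigraph.rev wb, hwa.append hwb.reverse, ?_, ?_⟩
    · rw [Multigraph.vl_append]
      intro hx
      rcases List.mem_append.mp hx with h1 | h1
      · exact hwax h1
      · have h2 : x ∈ G.vl (G.src e) (Multigraph.rev wb) := List.mem_cons_of_mem _ h1
        rw [hwb.vl_rev, List.mem_reverse] at h2
        exact hwbx h2
    · intro d hd
      rcases List.mem_append.mp hd with h1 | h1
      · exact hwae d h1
      · have := hwbe (Multigraph.fd d) (Multigraph.mem_rev.mp h1)
        simpa using this
  -- an initial path from src e to tgt e avoiding e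
  have huv : G.src e ≠ G.tgt e := hloop e
  obtain ⟨x0, hx1, hx2, -⟩ := h4 (G.src e) (G.tgt e) (G.tgt e)
  obtain ⟨w0, hw0, -, hw0e⟩ := hA x0 (G.src e) (G.tgt e) (Ne.symm hx1) (Ne.symm hx2)
  obtain ⟨p0, hp0, hp0nd, hp0mem⟩ := Multigraph.exists_path G w0.length w0 _ _ le_rfl hw0
  obtain ⟨P, Q, hP, hPnd, hQ, hQnd, hPe, hQe, hmeet, hdisj⟩ :=
    Multigraph.whitney hloop hA h4 p0.length (G.src e) (G.tgt e) huv
      ⟨p0, hp0, hp0nd, fun d hd => hw0e d (hp0mem d hd), le_rfl⟩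
  have hd1 : G.dsrc ((e, true) : Dart E) = G.src e := rfl
  have ht1 : G.dtgt ((e, true) : Dart E) = G.tgt e := rfl
  have hcyc1 : G.IsCycle ((e, true) :: Multigraph.rev P) := by
    refine Multigraph.cycle_cons hd1 ht1 hP.reverse ?_ ?_ ?_
    · rw [hP.vl_rev]; exact List.nodup_reverse.mpr hPnd
    · rw [Multigraph.map_fst_rev]
      exact List.nodup_reverse.mpr (Multigraph.nodup_fst hP hPnd)
    · rw [Multigraph.map_fst_rev, List.mem_reverse]
      intro hmem
      obtain ⟨d, hd, hd1'⟩ := List.mem_map.mp hmem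
      exact hPe d hd hd1'
  have hcyc2 : G.IsCycle ((e, true) :: Multigraph.rev Q) := by
    refine Multigraph.cycle_cons hd1 ht1 hQ.reverse ?_ ?_ ?_
    · rw [hQ.vl_rev]; exact List.nodup_reverse.mpr hQnd
    · rw [Multigraph.map_fst_rev]
      exact List.nodup_reverse.mpr (Multigraph.nodup_fst hQ hQnd)
    · rw [Multigraph.map_fst_rev, List.mem_reverse]
      intro hmem
      obtain ⟨d, hd, hd1'⟩ := List.mem_map.mp hmem
      exact hQe d hd hd1'
  have hcyc3 : G.IsCycle (Q ++ Multigraph.rev P) :=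
    Multigraph.cycle_glue hP hQ hPnd hQnd hmeet hdisj huv
  have hfstP : ∀ y ∈ P.map Prod.fst, y ≠ e := by
    intro y hy
    obtain ⟨d, hd, rfl⟩ := List.mem_map.mp hy
    exact hPe d hd
  have hfstQ : ∀ y ∈ Q.map Prod.fst, y ≠ e := by
    intro y hy
    obtain ⟨d, hd, rfl⟩ := List.mem_map.mp hy
    exact hQe d hd
  have hmem1 : ∀ (R : List (Dart E)) (y : E),
      y ∈ Multigraph.edges ((e, true) :: Multigraph.rev R) ↔
        y = e ∨ y ∈ R.map Prod.fst := by
    intro R y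
    rw [Multigraph.mem_edges, List.map_cons, Multigraph.map_fst_rev]
    simp
  have hmem3 : ∀ y : E, y ∈ Multigraph.edges (Q ++ Multigraph.rev P) ↔
      y ∈ Q.map Prod.fst ∨ y ∈ P.map Prod.fst := by
    intro y
    rw [Multigraph.mem_edges, List.map_append, Multigraph.map_fst_rev,
      List.mem_append, List.mem_reverse]
  have hrevtgt : ∀ (R : List (Dart E)) (y : V),
      y ∈ (Multigraph.rev R).map G.dsrc ↔ y ∈ R.map G.dtgt := by
    intro R y
    constructor
    · intro hy
      obtain ⟨d, hd, rfl⟩ := List.mem_map.mp hy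
      exact List.mem_map.mpr ⟨Multigraph.fd d, Multigraph.mem_rev.mp hd, by simp⟩
    · intro hy
      obtain ⟨d, hd, rfl⟩ := List.mem_map.mp hy
      exact List.mem_map.mpr ⟨Multigraph.fd d, Multigraph.mem_rev.mpr (by simpa using hd),
        by simp⟩
  have hverts : ∀ (R : List (Dart E)) (y : V),
      y ∈ G.vertsOf ((e, true) :: Multigraph.rev R) ↔ y ∈ G.vl (G.src e) R := by
    intro R y
    rw [Multigraph.mem_vertsOf, List.map_cons, hd1]
    constructor
    · intro h
      rcases List.mem_cons.mp h with h | h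
      · exact h ▸ List.mem_cons_self
      · exact List.mem_cons_of_mem _ ((hrevtgt R y).mp h)
    · intro h
      rcases List.mem_cons.mp h with h | h
      · exact h ▸ List.mem_cons_self
      · exact List.mem_cons_of_mem _ ((hrevtgt R y).mpr h)
  refine ⟨(e, true) :: Multigraph.rev P, (e, true) :: Multigraph.rev Q,
    Q ++ Multigraph.rev P, hcyc1, hcyc2, hcyc3,
    List.mem_cons_self, List.mem_cons_self, ?_, ?_, ?_, ?_, ?_⟩
  · ext y
    simp only [Set.mem_inter_iff, Set.mem_singleton_iff]
    rw [hmem1 P y, hmem1 Q y]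
    constructor
    · rintro ⟨h1 | h1, h2 | h2⟩
      · exact h1
      · exact h1
      · exact h2
      · exfalso
        obtain ⟨d, hd, rfl⟩ := List.mem_map.mp h1
        obtain ⟨d', hd', h⟩ := List.mem_map.mp h2
        exact hdisj d hd d' hd' h.symm
    · rintro rfl
      exact ⟨Or.inl rfl, Or.inl rfl⟩
  · ext y
    simp only [Set.mem_inter_iff, Set.mem_insert_iff, Set.mem_singleton_iff]
    rw [hverts P y, hverts Q y]
    constructor
    · rintro ⟨h1, h2⟩
      exact hmeet y h1 h2
    · rintro (rfl | rfl)
      · exact ⟨List.mem_cons_self, List.mem_cons_self⟩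
      · exact ⟨hP.last_mem_vl, hQ.last_mem_vl⟩
  · simp only [Multigraph.chain_append, Multigraph.chain_cons, Multigraph.chain_rev]
    abel
  · ext y
    simp only [Set.mem_diff, Set.mem_union, Set.mem_singleton_iff]
    rw [hmem3 y, hmem1 P y, hmem1 Q y]
    constructor
    · rintro (h | h)
      · exact ⟨Or.inr (Or.inr h), hfstQ y h⟩
      · exact ⟨Or.inl (Or.inr h), hfstP y h⟩
    · rintro ⟨(h | h) | (h | h), hne⟩
      · exact absurd h hne
      · exact Or.inr h
      · exact absurd h hne
      · exact Or.inl h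
  · simp only [Multigraph.walkLength_append, Multigraph.walkLength_cons,
      Multigraph.walkLength_rev]
    ring
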